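/- Let b₁^(1/m₁), …, b_k^(1/m_k) be positive reals with b_i ∈ ℚ⁺, m_i ≥ 2, such that for every tuple (ε₁, …, ε_k) with 0 ≤ ε_i ≤ m_i − 1 not all zero, the product ∏ b_i^(ε_i/m_i) is irrational (a 'reduced set'). Then the numbers {∏_{i=1}^k b_i^(ε_i/m_i) : 0 ≤ ε_i ≤ m_i − 1} are linearly independent over ℚ. -/

import Mathlib

open Polynomial IntermediateField

/-- If `x > 0` is a real number with `x ^ n` rational (`n ≥ 1`), then `x` raised to the degree
of its minimal polynomial over `ℚ` is rational. -/
lemma aux_pow_natDegree_rat {x : ℝ} (hx : 0 < x) {n : ℕ} (hn : 0 < n) {q : ℚ}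
    (hq : x ^ n = (q : ℝ)) :
    ∃ s : ℚ, 0 < s ∧ x ^ (minpoly ℚ x).natDegree = (s : ℝ) := by
  have hq0 : 0 < q := by
    have : (0 : ℝ) < (q : ℝ) := hq ▸ pow_pos hx n
    exact_mod_cast this
  have haev : (Polynomial.aeval x) (X ^ n - C q) = 0 := by
    simp [hq]
  have hXn : (X ^ n - C q : ℚ[X]) ≠ 0 := by
    intro h
    have := congrArg (Polynomial.natDegree) h
    simp [natDegree_X_pow_sub_C] at this
    omega
  have hint : IsIntegral ℚ x := ⟨X ^ n - C q, monic_X_pow_sub_C q hn.ne', haev⟩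
  set μ := minpoly ℚ x with hμ
  have hmonic : μ.Monic := minpoly.monic hint
  have hdvd : μ ∣ X ^ n - C q := minpoly.dvd ℚ x haev
  set r := μ.natDegree with hr
  -- work over ℂ
  have hsplits : Splits (μ.map (algebraMap ℚ ℂ)) := IsAlgClosed.splits _
  set P := μ.map (algebraMap ℚ ℂ) with hP
  have hcard : r = Multiset.card P.roots :=
    (natDegree_map (p := μ) (algebraMap ℚ ℂ)).symm.trans hsplits.natDegree_eq_card_roots
  have habs : ∀ z ∈ P.roots, ‖z‖ = x := by
    intro z hz
    have hz0 : P.eval z = 0 := by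
      have := Polynomial.isRoot_of_mem_roots hz
      exact this
    have hdvd' : P ∣ (X ^ n - C q : ℚ[X]).map (algebraMap ℚ ℂ) := Polynomial.map_dvd _ hdvd
    have : ((X ^ n - C q : ℚ[X]).map (algebraMap ℚ ℂ)).eval z = 0 :=
      Polynomial.eval_eq_zero_of_dvd_of_eval_eq_zero hdvd' hz0
    have hzn : z ^ n = (q : ℂ) := by
      simpa [Polynomial.eval_pow, sub_eq_zero] using this
    have : ‖z‖ ^ n = x ^ n := by
      rw [← norm_pow, hzn, hq]
      have : ((q : ℂ)) = ((q : ℝ) : ℂ) := by push_cast; ring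
      rw [this, Complex.norm_real, Real.norm_eq_abs, abs_of_pos (by exact_mod_cast hq0)]
    exact (pow_left_inj₀ (norm_nonneg z) hx.le hn.ne') |>.mp this
  -- product of roots
  have hmonicP : P.Monic := hmonic.map _
  have hsplitsP : P.Splits := hsplits
  have hprod : P.coeff 0 = (-1) ^ P.natDegree * P.roots.prod :=
    hsplitsP.coeff_zero_eq_prod_roots_of_monic hmonicP
  have habs0 : ‖P.coeff 0‖ = x ^ r := by
    rw [hprod, norm_mul, norm_pow]
    have h1 : ‖(-1 : ℂ)‖ = 1 := by norm_num
    rw [h1, one_pow, one_mul,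
      show ‖P.roots.prod‖ = (P.roots.map (‖·‖)).prod from map_multiset_prod (normHom : ℂ →*₀ ℝ) _]
    have : P.roots.map (‖·‖) = P.roots.map (fun _ => x) := by
      apply Multiset.map_congr rfl
      intro z hz
      exact habs z hz
    rw [this, Multiset.map_const', Multiset.prod_replicate, ← hcard]
  have hcast : (algebraMap ℚ ℂ) (μ.coeff 0) = (((μ.coeff 0 : ℚ) : ℝ) : ℂ) := by
    rw [eq_ratCast]
    push_cast
    ring
  have hkey : x ^ r = ((|μ.coeff 0| : ℚ) : ℝ) := by
    rw [← habs0, hP, Polynomial.coeff_map, hcast, Complex.norm_real, Real.norm_eq_abs]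
    push_cast
    ring
  refine ⟨|μ.coeff 0|, ?_, hkey⟩
  have : (0 : ℝ) < ((|μ.coeff 0| : ℚ) : ℝ) := hkey ▸ pow_pos hx r
  exact_mod_cast this

lemma aux_minpoly_eq {x : ℝ} (hx : 0 < x) (hirr : Irrational x) {n : ℕ} (hn : 0 < n) {q : ℚ}
    (hq : x ^ n = (q : ℝ)) :
    ∃ (r : ℕ) (s : ℚ), 2 ≤ r ∧ minpoly ℚ x = X ^ r - C s := by
  obtain ⟨s, hs0, hxr⟩ := aux_pow_natDegree_rat hx hn hq
  have hint : IsIntegral ℚ x := ⟨X ^ n - C q, monic_X_pow_sub_C q hn.ne', by simp [hq]⟩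
  set r := (minpoly ℚ x).natDegree with hr
  have hrpos : 0 < r := minpoly.natDegree_pos hint
  have hr2 : 2 ≤ r := by
    by_contra h
    have hr1 : r = 1 := by omega
    rw [hr1, pow_one] at hxr
    exact hirr ⟨s, hxr.symm⟩
  refine ⟨r, s, hr2, ?_⟩
  have hdvd : minpoly ℚ x ∣ X ^ r - C s := minpoly.dvd ℚ x (by simp [hxr])
  have hm2 : (X ^ r - C s : ℚ[X]).Monic := monic_X_pow_sub_C s hrpos.ne'
  exact (eq_of_monic_of_dvd_of_natDegree_le (minpoly.monic hint) hm2 hdvd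
    (by rw [natDegree_X_pow_sub_C])).symm

lemma aux_trace_eq_zero {K : Type*} [Field K] [Algebra ℚ K] [FiniteDimensional ℚ K] {y : K}
    (f : K →ₐ[ℚ] ℝ) (hy : 0 < f y) (hirr : Irrational (f y)) {n : ℕ} (hn : 0 < n) {q : ℚ}
    (hq : (f y) ^ n = (q : ℝ)) : Algebra.trace ℚ K y = 0 := by
  obtain ⟨r, s, hr2, hmin⟩ := aux_minpoly_eq hy hirr hn hq
  have hminy : minpoly ℚ y = X ^ r - C s := by
    rw [← minpoly.algHom_eq f f.injective y, hmin]
  have hsplit : ((minpoly ℚ y).map (algebraMap ℚ ℂ)).Splits := IsAlgClosed.splits _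
  have h1 : algebraMap ℚ ℂ (Algebra.trace ℚ K y)
      = Module.finrank ℚ⟮y⟯ K • ((minpoly ℚ y).aroots ℂ).sum := trace_eq_sum_roots hsplit
  have hnext : (minpoly ℚ y).nextCoeff = 0 := by
    rw [hminy]
    have hdeg : (X ^ r - C s : ℚ[X]).natDegree = r := natDegree_X_pow_sub_C
    rw [nextCoeff_of_natDegree_pos (by omega : 0 < (X ^ r - C s : ℚ[X]).natDegree), hdeg]
    have h1 : ¬(r - 1 = r) := by omega
    have h2 : ¬(r - 1 = 0) := by omega
    simp [coeff_X_pow, coeff_C, h1, h2]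
  have hmono : ((minpoly ℚ y).map (algebraMap ℚ ℂ)).Monic := by
    rw [hminy]
    exact (monic_X_pow_sub_C s (by omega : r ≠ 0)).map _
  have h2 : ((minpoly ℚ y).aroots ℂ).sum = 0 := by
    have h3 := hsplit.nextCoeff_eq_neg_sum_roots_of_monic hmono
    rw [nextCoeff_map (algebraMap ℚ ℂ).injective, hnext] at h3
    have : ((minpoly ℚ y).map (algebraMap ℚ ℂ)).roots.sum = 0 := by
      have := h3.symm
      simpa using this
    simpa [aroots_def] using this
  rw [h2, smul_zero] at h1
  exact (map_eq_zero_iff _ (algebraMap ℚ ℂ).injective).mp h1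

lemma aux_mod_cancel {M a c : ℕ} (hM : 0 < M) (ha : a < M) (hc : c < M)
    (h : (a + (M - c) % M) % M = 0) : a = c := by
  rcases Nat.eq_zero_or_pos c with hc0 | hc0
  · subst hc0
    rw [Nat.sub_zero, Nat.mod_self, Nat.add_zero] at h
    have := Nat.eq_zero_of_dvd_of_lt (Nat.dvd_of_mod_eq_zero h)
    omega
  · rw [Nat.mod_eq_of_lt (by omega : M - c < M)] at h
    obtain ⟨t, ht⟩ := Nat.dvd_of_mod_eq_zero h
    rcases t with _ | t
    · rw [Nat.mul_zero] at ht
      omega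
    · rcases t with _ | t
      · rw [Nat.mul_one] at ht
        omega
      · exfalso
        have h2M : 2 * M ≤ M * (t + 1 + 1) := by nlinarith [Nat.zero_le (M * t)]
        have habs : 2 * M ≤ a + (M - c) := ht ▸ h2M
        omega

lemma aux_mod_self {M c : ℕ} (hM : 0 < M) (hc : c < M) : (c + (M - c) % M) % M = 0 := by
  rcases Nat.eq_zero_or_pos c with h0 | h0
  · subst h0; simp [Nat.mod_self]
  · rw [Nat.mod_eq_of_lt (by omega : M - c < M)]
    have : c + (M - c) = M := by omega
    rw [this, Nat.mod_self]

lemma aux_rpow_split {B : ℝ} (hB : 0 < B) {M : ℕ} (hM : 0 < M) (a c : ℕ) :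
    B ^ ((a : ℝ) / M) * B ^ ((c : ℝ) / M)
      = (B ^ ((a + c) / M)) * B ^ ((((a + c) % M : ℕ) : ℝ) / M) := by
  rw [← Real.rpow_natCast B ((a + c) / M), ← Real.rpow_add hB, ← Real.rpow_add hB]
  congr 1
  have hM' : (M : ℝ) ≠ 0 := Nat.cast_ne_zero.mpr hM.ne'
  have key : (M : ℝ) * (((a + c) / M : ℕ) : ℝ) + (((a + c) % M : ℕ) : ℝ) = (a : ℝ) + c := by
    exact_mod_cast congrArg (Nat.cast : ℕ → ℝ) (Nat.div_add_mod (a + c) M)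
  field_simp
  linear_combination -key

lemma aux_pow_prod {k : ℕ} (b : Fin k → ℚ) (hb : ∀ i, 0 < b i) (m : Fin k → ℕ)
    (hm : ∀ i, 0 < m i) (e : Fin k → ℕ) :
    (∏ i, (b i : ℝ) ^ ((e i : ℝ) / (m i : ℝ))) ^ (∏ i, m i)
      = ((∏ i, b i ^ (e i * ((∏ j, m j) / m i)) : ℚ) : ℝ) := by
  push_cast
  rw [← Finset.prod_pow]
  apply Finset.prod_congr rfl
  intro i _
  have hbi : (0:ℝ) < (b i : ℝ) := by exact_mod_cast hb i
  have hmi : (m i : ℝ) ≠ 0 := Nat.cast_ne_zero.mpr (hm i).ne'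
  rw [← Real.rpow_natCast ((b i : ℝ) ^ ((e i : ℝ) / (m i : ℝ))) (∏ j, m j),
      ← Real.rpow_mul hbi.le, ← Real.rpow_natCast (b i : ℝ) (e i * ((∏ j, m j) / m i))]
  congr 1
  obtain ⟨t, ht⟩ := Finset.dvd_prod_of_mem m (Finset.mem_univ i)
  rw [ht, Nat.mul_div_cancel_left t (hm i)]
  push_cast
  field_simp

theorem reduced_set_products_linearIndependent (k : ℕ) (b : Fin k → ℚ) (m : Fin k → ℕ)
    (hb : ∀ i, 0 < b i) (hm : ∀ i, 2 ≤ m i)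
    (hred : ∀ ε : (i : Fin k) → Fin (m i), (¬ ∀ i, (ε i : ℕ) = 0) →
      Irrational (∏ i, (b i : ℝ) ^ ((ε i : ℝ) / (m i : ℝ)))) :
    LinearIndependent ℚ
      (fun ε : (i : Fin k) → Fin (m i) =>
        ∏ i, (b i : ℝ) ^ ((ε i : ℝ) / (m i : ℝ))) := by
  classical
  have hmpos : ∀ i, 0 < m i := fun i => lt_of_lt_of_le zero_lt_two (hm i)
  have hbR : ∀ i, (0:ℝ) < (b i : ℝ) := fun i => by exact_mod_cast hb i
  set x : ((i : Fin k) → Fin (m i)) → ℝ :=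
    fun ε => ∏ i, (b i : ℝ) ^ ((ε i : ℝ) / (m i : ℝ)) with hxdef
  have hxpos : ∀ ε, 0 < x ε := fun ε =>
    Finset.prod_pos fun i _ => Real.rpow_pos_of_pos (hbR i) _
  set N : ℕ := ∏ i, m i with hNdef
  have hNpos : 0 < N := Finset.prod_pos fun i _ => hmpos i
  have hrat : ∀ ε, ∃ q : ℚ, 0 < q ∧ x ε ^ N = (q : ℝ) := by
    intro ε
    refine ⟨∏ i, b i ^ ((ε i : ℕ) * (N / m i)), ?_, ?_⟩
    · exact Finset.prod_pos fun i _ => pow_pos (hb i) _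
    · exact aux_pow_prod b hb m hmpos (fun i => (ε i : ℕ))
  have halg : ∀ ε, IsIntegral ℚ (x ε) := by
    intro ε
    obtain ⟨q, hq0, hq⟩ := hrat ε
    exact ⟨Polynomial.X ^ N - Polynomial.C q, monic_X_pow_sub_C q hNpos.ne', by simp [hq]⟩
  set K := IntermediateField.adjoin ℚ (Set.range x) with hKdef
  haveI : Finite (Set.range x) := Set.finite_range x
  haveI : FiniteDimensional ℚ K :=
    IntermediateField.finiteDimensional_adjoin fun y hy => by
      obtain ⟨ε, rfl⟩ := hy; exact halg ε
  set XX : ((i : Fin k) → Fin (m i)) → K :=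
    fun ε => ⟨x ε, IntermediateField.subset_adjoin ℚ _ ⟨ε, rfl⟩⟩ with hXdef
  rw [Fintype.linearIndependent_iff]
  intro q hq ε₀
  set ε₀' : (i : Fin k) → Fin (m i) :=
    fun i => ⟨(m i - (ε₀ i : ℕ)) % m i, Nat.mod_lt _ (hmpos i)⟩ with hε₀'def
  set δ : ((i : Fin k) → Fin (m i)) → ((i : Fin k) → Fin (m i)) :=
    fun ε i => ⟨((ε i : ℕ) + (ε₀' i : ℕ)) % m i, Nat.mod_lt _ (hmpos i)⟩ with hδdef
  set r : ((i : Fin k) → Fin (m i)) → ℚ :=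
    fun ε => ∏ i, b i ^ (((ε i : ℕ) + (ε₀' i : ℕ)) / m i) with hrdef
  have hrpos : ∀ ε, 0 < r ε := fun ε => Finset.prod_pos fun i _ => pow_pos (hb i) _
  have hmul : ∀ ε, x ε * x ε₀' = (r ε : ℝ) * x (δ ε) := by
    intro ε
    show (∏ i, (b i : ℝ) ^ ((ε i : ℝ) / (m i : ℝ)))
        * (∏ i, (b i : ℝ) ^ ((ε₀' i : ℝ) / (m i : ℝ)))
      = ((r ε : ℚ) : ℝ) * ∏ i, (b i : ℝ) ^ ((δ ε i : ℝ) / (m i : ℝ))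
    rw [hrdef]
    push_cast
    rw [← Finset.prod_mul_distrib, ← Finset.prod_mul_distrib]
    apply Finset.prod_congr rfl
    intro i _
    exact aux_rpow_split (hbR i) (hmpos i) (ε i : ℕ) (ε₀' i : ℕ)
  have hsum1 : ∑ ε, (q ε * r ε) • x (δ ε) = 0 := by
    have h1 : ∑ ε, (q ε * r ε) • x (δ ε) = (∑ ε, q ε • x ε) * x ε₀' := by
      rw [Finset.sum_mul]
      apply Finset.sum_congr rfl
      intro ε _
      rw [smul_mul_assoc, hmul ε, mul_smul, Rat.smul_def (r ε), Rat.smul_def (q ε)]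
    rw [h1, hq, zero_mul]
  have hsumK : ∑ ε, (q ε * r ε) • XX (δ ε) = 0 := by
    apply (algebraMap K ℝ).injective
    rw [map_sum, map_zero]
    rw [← hsum1]
    apply Finset.sum_congr rfl
    intro ε _
    rw [Algebra.smul_def, map_mul]
    rw [show (algebraMap K ℝ) (XX (δ ε)) = x (δ ε) from rfl]
    have hc : (algebraMap K ℝ) ((algebraMap ℚ K) (q ε * r ε)) = ((q ε * r ε : ℚ) : ℝ) :=
      eq_ratCast ((algebraMap K ℝ).comp (algebraMap ℚ K)) _
    rw [hc, Rat.smul_def]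
  have htr := congrArg (Algebra.trace ℚ K) hsumK
  rw [map_sum, map_zero] at htr
  have htr' : ∑ ε, (q ε * r ε) • Algebra.trace ℚ K (XX (δ ε)) = 0 := by
    rw [← htr]
    exact Finset.sum_congr rfl fun ε _ => (map_smul _ _ _).symm
  have key0 : ∀ ε, ε ≠ ε₀ → Algebra.trace ℚ K (XX (δ ε)) = 0 := by
    intro ε hne
    have hnz : ¬ ∀ i, ((δ ε i : ℕ) = 0) := by
      intro hall
      exact hne (funext fun i =>
        Fin.ext (aux_mod_cancel (hmpos i) (ε i).isLt (ε₀ i).isLt (hall i)))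
    have hirr : Irrational (x (δ ε)) := hred (δ ε) hnz
    obtain ⟨p, hp0, hpw⟩ := hrat (δ ε)
    exact aux_trace_eq_zero K.val (hxpos (δ ε)) hirr hNpos hpw
  have hδ0 : ∀ i, ((δ ε₀ i : ℕ)) = 0 := fun i => aux_mod_self (hmpos i) (ε₀ i).isLt
  have key1 : XX (δ ε₀) = 1 := by
    apply Subtype.ext
    show (∏ i, (b i : ℝ) ^ ((δ ε₀ i : ℝ) / (m i : ℝ))) = 1
    apply Finset.prod_eq_one
    intro i _
    have h0 : (((δ ε₀ i : ℕ)) : ℝ) = 0 := by exact_mod_cast hδ0 i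
    rw [show ((δ ε₀ i : ℕ) : ℝ) = 0 from h0, zero_div, Real.rpow_zero]
  rw [Finset.sum_eq_single_of_mem ε₀ (Finset.mem_univ _)
    (fun ε _ hne => by rw [key0 ε hne, smul_zero])] at htr'
  rw [key1] at htr'
  have htrone : Algebra.trace ℚ K (1 : K) = (Module.finrank ℚ K : ℚ) := by
    have h := Algebra.trace_algebraMap (R := ℚ) (S := K) 1
    rw [map_one] at h
    rw [h]
    simp
  rw [htrone, smul_eq_mul] at htr'
  have hfr : (0:ℚ) < (Module.finrank ℚ K : ℚ) := by exact_mod_cast Module.finrank_pos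
  rcases mul_eq_zero.mp htr' with h | h
  · rcases mul_eq_zero.mp h with h' | h'
    · exact h'
    · exact absurd h' (hrpos ε₀).ne'
  · exact absurd h hfr.ne'
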